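/- Fix d ∈ (0,1) and Δ ≥ 0. For all reals ℓ₁, ℓ₂ with 1 ≤ ℓ₁ < ℓ₂, it holds that I(ℓ₁) ≤ I(ℓ₂); that is, the constrained supremum I(ℓ) of the penalized run-length rate h is monotonously non-decreasing in the mean run length ℓ. -/

import Mathlib

/-- A finitely supported probability mass function on the positive integers
(represented as a function on `ℕ` vanishing at `0`). -/
def IsRunPMF (P : ℕ → ℝ) : Prop :=
  (∀ i, 0 ≤ P i) ∧ P 0 = 0 ∧ (Function.support P).Finite ∧ ∑' i : ℕ, P i = 1

/-- `P_{i→j} = C(i,j)·(1−d)^j·d^(i−j)`: the probability that a run of `i` bits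
sent through the binary deletion channel with deletion probability `d` yields
`j` surviving bits (equal to `0` for `j > i`). -/
noncomputable def Ptrans (d : ℝ) (i j : ℕ) : ℝ :=
  (i.choose j : ℝ) * (1 - d) ^ j * d ^ (i - j)

/-- The run-length information rate
`R_mem(𝒫) = Σ_{i,j} 𝒫_i·P_{i→j}·log₂(P_{i→j} / Σ_{i'} 𝒫_{i'}·P_{i'→j})`,
with terms whose numerator vanishes taken to be `0` (they are multiplied by the
vanishing factor `𝒫_i·P_{i→j}`). -/
noncomputable def Rmem (d : ℝ) (P : ℕ → ℝ) : ℝ :=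
  ∑' i : ℕ, ∑' j : ℕ, P i * Ptrans d i j *
    Real.logb 2 (Ptrans d i j / (∑' i' : ℕ, P i' * Ptrans d i' j))

/-- The penalized rate `h(𝒫) = R_mem(𝒫) − Δ·Σ_i 𝒫_i·d^i`. -/
noncomputable def hPen (d Δ : ℝ) (P : ℕ → ℝ) : ℝ :=
  Rmem d P - Δ * ∑' i : ℕ, P i * d ^ i

/-- The mean run length `L(𝒫) = Σ_i i·𝒫_i`. -/
noncomputable def Lmean (P : ℕ → ℝ) : ℝ :=
  ∑' i : ℕ, (i : ℝ) * P i

/-- `I(ℓ)`: the supremum of the penalized rate `h` over finitely supported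
pmfs on the positive integers with mean run length `ℓ`. -/
noncomputable def Isup (d Δ ℓ : ℝ) : ℝ :=
  sSup { r | ∃ P : ℕ → ℝ, IsRunPMF P ∧ Lmean P = ℓ ∧ r = hPen d Δ P }

open Finset Real

lemma ptrans_nonneg {d : ℝ} (hd0 : 0 ≤ d) (hd1 : d ≤ 1) (i j : ℕ) : 0 ≤ Ptrans d i j := by
  have h1 : (0:ℝ) ≤ 1 - d := by linarith
  unfold Ptrans; positivity

lemma ptrans_zero {d : ℝ} {i j : ℕ} (h : i < j) : Ptrans d i j = 0 := by
  unfold Ptrans; rw [Nat.choose_eq_zero_of_lt h]; simp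

lemma ptrans_pos {d : ℝ} (hd0 : 0 < d) (hd1 : d < 1) {i j : ℕ} (h : j ≤ i) : 0 < Ptrans d i j := by
  have h1 : (0:ℝ) < 1 - d := by linarith
  have hc : 0 < (i.choose j : ℝ) := by exact_mod_cast Nat.choose_pos h
  unfold Ptrans; positivity

lemma ptrans_sum (d : ℝ) (i : ℕ) : ∑ j ∈ range (i+1), Ptrans d i j = 1 := by
  have h := add_pow (1 - d) d i
  simp only [sub_add_cancel, one_pow] at h
  calc ∑ j ∈ range (i+1), Ptrans d i j
      = ∑ j ∈ range (i+1), (1-d)^j * d^(i-j) * (i.choose j : ℝ) := by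
        apply Finset.sum_congr rfl; intro j _; unfold Ptrans; ring
    _ = 1 := h.symm

lemma ptrans_sum' {d : ℝ} {i n : ℕ} (h : i < n) :
    ∑ j ∈ range n, Ptrans d i j = 1 := by
  rw [← ptrans_sum d i]
  apply (Finset.sum_subset _ _).symm
  · intro x hx; simp at hx ⊢; omega
  · intro x _ hx; simp at hx; exact ptrans_zero (by omega)

lemma ptrans_le_one {d : ℝ} (hd0 : 0 ≤ d) (hd1 : d ≤ 1) (i j : ℕ) : Ptrans d i j ≤ 1 := by
  rcases le_or_gt j i with h | h
  · calc Ptrans d i j ≤ ∑ k ∈ range (i+1), Ptrans d i k := by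
          apply Finset.single_le_sum (fun k _ => ptrans_nonneg hd0 hd1 i k)
          simp; omega
      _ = 1 := ptrans_sum d i
  · rw [ptrans_zero h]; norm_num

/-- Gibbs' inequality over a finite set. -/
lemma gibbs (s : Finset ℕ) (p q : ℕ → ℝ) (hp : ∀ i ∈ s, 0 ≤ p i)
    (hq0 : ∀ i ∈ s, 0 ≤ q i) (hq : ∀ i ∈ s, 0 < p i → 0 < q i)
    (hps : ∑ i ∈ s, p i = 1) (hqs : ∑ i ∈ s, q i ≤ 1) :
    0 ≤ ∑ i ∈ s, p i * Real.logb 2 (p i / q i) := by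
  have key : ∀ i ∈ s, p i * Real.log (q i / p i) ≤ q i - p i := by
    intro i hi
    rcases eq_or_lt_of_le (hp i hi) with h0 | h0
    · rw [← h0]; simp [hq0 i hi]
    · have hqi := hq i hi h0
      have hpos : 0 < q i / p i := div_pos hqi h0
      have h1 := Real.log_le_sub_one_of_pos hpos
      have h2 : p i * Real.log (q i / p i) ≤ p i * (q i / p i - 1) :=
        mul_le_mul_of_nonneg_left h1 h0.le
      have h3 : p i * (q i / p i - 1) = q i - p i := by field_simp
      linarith
  have hsum : ∑ i ∈ s, p i * Real.log (q i / p i) ≤ 0 := by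
    calc ∑ i ∈ s, p i * Real.log (q i / p i) ≤ ∑ i ∈ s, (q i - p i) := Finset.sum_le_sum key
      _ = (∑ i ∈ s, q i) - ∑ i ∈ s, p i := Finset.sum_sub_distrib _ _
      _ ≤ 0 := by rw [hps]; linarith
  have heq : ∀ i ∈ s, p i * Real.logb 2 (p i / q i) = -(p i * Real.log (q i / p i)) / Real.log 2 := by
    intro i hi
    rcases eq_or_lt_of_le (hp i hi) with h0 | h0
    · rw [← h0]; simp
    · have hqi := hq i hi h0
      rw [Real.logb, Real.log_div hqi.ne' h0.ne', Real.log_div h0.ne' hqi.ne']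
      ring
  rw [Finset.sum_congr rfl heq]
  have hl2 : (0:ℝ) < Real.log 2 := Real.log_pos (by norm_num)
  rw [← Finset.sum_div]
  apply div_nonneg ?_ hl2.le
  rw [Finset.sum_neg_distrib]
  linarith

lemma tsum_mul_ptrans (d : ℝ) (P : ℕ → ℝ) (s : Finset ℕ) (hsupp : ∀ i ∉ s, P i = 0) (j : ℕ) :
    ∑' i, P i * Ptrans d i j = ∑ i ∈ s, P i * Ptrans d i j :=
  tsum_eq_sum (fun i hi => by rw [hsupp i hi, zero_mul])

lemma Rmem_eq (d : ℝ) (P : ℕ → ℝ) (s : Finset ℕ) (hsupp : ∀ i ∉ s, P i = 0)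
    (N : ℕ) (hN : ∀ i ∈ s, i ≤ N) :
    Rmem d P = ∑ i ∈ s, ∑ j ∈ range (N+1),
      P i * Ptrans d i j * Real.logb 2 (Ptrans d i j / ∑ i' ∈ s, P i' * Ptrans d i' j) := by
  unfold Rmem
  rw [tsum_eq_sum (s := s) (fun i hi => by simp [hsupp i hi])]
  apply Finset.sum_congr rfl
  intro i hi
  rw [tsum_eq_sum (s := range (N+1))
    (fun j hj => by
      rw [ptrans_zero (show i < j by simp at hj; have := hN i hi; omega)]; ring)]
  exact Finset.sum_congr rfl (fun j _ => by rw [tsum_mul_ptrans d P s hsupp j])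

lemma Lmean_eq (P : ℕ → ℝ) (s : Finset ℕ) (hsupp : ∀ i ∉ s, P i = 0) :
    Lmean P = ∑ i ∈ s, (i:ℝ) * P i :=
  tsum_eq_sum (fun i hi => by rw [hsupp i hi, mul_zero])

lemma sum_pmf_eq (P : ℕ → ℝ) (s : Finset ℕ) (hsupp : ∀ i ∉ s, P i = 0) :
    ∑' i, P i = ∑ i ∈ s, P i := tsum_eq_sum (fun i hi => hsupp i hi)

lemma pen_eq (d : ℝ) (P : ℕ → ℝ) (s : Finset ℕ) (hsupp : ∀ i ∉ s, P i = 0) :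
    ∑' i : ℕ, P i * d ^ i = ∑ i ∈ s, P i * d ^ i :=
  tsum_eq_sum (fun i hi => by rw [hsupp i hi, zero_mul])

lemma sum_half_pow_le (n : ℕ) : ∑ i ∈ range n, ((2:ℝ)⁻¹)^i ≤ 2 := by
  rw [geom_sum_eq (by norm_num)]
  have h : (0:ℝ) ≤ (2:ℝ)⁻¹^n := by positivity
  have h2 : ((2:ℝ)⁻¹^n - 1)/((2:ℝ)⁻¹ - 1) = 2 - 2 * (2:ℝ)⁻¹^n := by field_simp; ring
  rw [h2]; linarith

lemma entropy_le (P : ℕ → ℝ) (s : Finset ℕ) (hs0 : 0 ∉ s) (hppos : ∀ i ∈ s, 0 < P i)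
    (hps : ∑ i ∈ s, P i = 1) :
    ∑ i ∈ s, P i * Real.logb 2 (1 / P i) ≤ ∑ i ∈ s, (i:ℝ) * P i := by
  have hqsum : ∑ i ∈ s, ((2:ℝ)⁻¹)^i ≤ 1 := by
    classical
    rcases s.eq_empty_or_nonempty with rfl | hne
    · simp
    have hN : ∀ i ∈ s, i ≤ s.max' hne := fun i hi => Finset.le_max' s i hi
    have hsub : s ⊆ (range (s.max' hne + 1)).erase 0 := by
      intro i hi
      simp [Finset.mem_erase, Finset.mem_range]
      constructor
      · rintro rfl; exact hs0 hi
      · have := hN i hi; omega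
    calc ∑ i ∈ s, ((2:ℝ)⁻¹)^i ≤ ∑ i ∈ (range (s.max' hne + 1)).erase 0, ((2:ℝ)⁻¹)^i := by
          apply Finset.sum_le_sum_of_subset_of_nonneg hsub
          intro i _ _; positivity
      _ ≤ 1 := by
          have h0 : (0:ℕ) ∈ range (s.max' hne + 1) := by simp
          have := Finset.sum_erase_add (range (s.max' hne + 1)) (fun i => ((2:ℝ)⁻¹)^i) h0
          have h2 := sum_half_pow_le (s.max' hne + 1)
          simp only [pow_zero] at this
          linarith
  have hg := gibbs s P (fun i => (2:ℝ)⁻¹ ^ i) (fun i hi => (hppos i hi).le)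
      (fun i hi => by positivity) (fun i hi _ => by positivity) hps hqsum
  have heq : ∀ i ∈ s, P i * Real.logb 2 (P i / (2:ℝ)⁻¹^i)
      = P i * Real.logb 2 (P i) + (i:ℝ) * P i := by
    intro i hi
    have hp := hppos i hi
    have hq : ((2:ℝ)⁻¹:ℝ)^i ≠ 0 := by positivity
    rw [Real.logb_div hp.ne' hq, Real.logb_pow, Real.logb_inv,
      Real.logb_self_eq_one (by norm_num)]
    ring
  rw [Finset.sum_congr rfl heq, Finset.sum_add_distrib] at hg
  have heq2 : ∀ i ∈ s, P i * Real.logb 2 (1 / P i) = -(P i * Real.logb 2 (P i)) := by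
    intro i _
    rw [one_div, Real.logb_inv]; ring
  rw [Finset.sum_congr rfl heq2, Finset.sum_neg_distrib]
  linarith

lemma support_lemmas {P : ℕ → ℝ} (hP : IsRunPMF P) :
    ∀ i ∉ hP.2.2.1.toFinset, P i = 0 := by
  intro i hi
  simpa [Set.Finite.mem_toFinset, Function.mem_support, not_not] using hi

lemma hPen_le_Lmean {d Δ : ℝ} (hd0 : 0 < d) (hd1 : d < 1) (hΔ : 0 ≤ Δ)
    (P : ℕ → ℝ) (hP : IsRunPMF P) : hPen d Δ P ≤ Lmean P := by
  classical
  obtain ⟨hp0, hP0, hfin, hsum⟩ := hP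
  set s := hfin.toFinset with hs
  have hsupp : ∀ i ∉ s, P i = 0 := by
    intro i hi; simpa [hs, Set.Finite.mem_toFinset, Function.mem_support, not_not] using hi
  have hppos : ∀ i ∈ s, 0 < P i := by
    intro i hi
    have : P i ≠ 0 := by simpa [hs, Set.Finite.mem_toFinset, Function.mem_support] using hi
    exact lt_of_le_of_ne (hp0 i) (Ne.symm this)
  have hsums : ∑ i ∈ s, P i = 1 := by rw [← sum_pmf_eq P s hsupp]; exact hsum
  have hs0 : 0 ∉ s := by
    intro h; exact absurd hP0 (hppos 0 h).ne'
  have hne : s.Nonempty := by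
    rcases s.eq_empty_or_nonempty with h | h
    · rw [h] at hsums; simp at hsums
    · exact h
  set N := s.max' hne with hNdef
  have hN : ∀ i ∈ s, i ≤ N := fun i hi => Finset.le_max' s i hi
  have hpen : 0 ≤ ∑' i : ℕ, P i * d ^ i :=
    tsum_nonneg (fun i => mul_nonneg (hp0 i) (pow_nonneg hd0.le i))
  have hRle : Rmem d P ≤ ∑ i ∈ s, (i:ℝ) * P i := by
    rw [Rmem_eq d P s hsupp N hN]
    calc ∑ i ∈ s, ∑ j ∈ range (N+1),
          P i * Ptrans d i j * Real.logb 2 (Ptrans d i j / ∑ i' ∈ s, P i' * Ptrans d i' j)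
        ≤ ∑ i ∈ s, ∑ j ∈ range (N+1), P i * Ptrans d i j * Real.logb 2 (1 / P i) := by
          apply Finset.sum_le_sum; intro i hi
          apply Finset.sum_le_sum; intro j _
          rcases eq_or_lt_of_le (ptrans_nonneg hd0.le hd1.le i j) with h0 | h0
          · rw [← h0]; simp
          · have hQ : P i * Ptrans d i j ≤ ∑ i' ∈ s, P i' * Ptrans d i' j := by
              apply Finset.single_le_sum
                (fun i' _ => mul_nonneg (hp0 i') (ptrans_nonneg hd0.le hd1.le i' j)) hi
            have hPi := hppos i hi
            have hQpos : 0 < P i * Ptrans d i j := mul_pos hPi h0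
            apply mul_le_mul_of_nonneg_left ?_ (mul_nonneg (hp0 i) h0.le)
            apply Real.logb_le_logb_of_le (by norm_num) (div_pos h0 (lt_of_lt_of_le hQpos hQ))
            calc Ptrans d i j / (∑ i' ∈ s, P i' * Ptrans d i' j)
                ≤ Ptrans d i j / (P i * Ptrans d i j) :=
                  div_le_div_of_nonneg_left h0.le hQpos hQ
              _ = 1 / P i := by
                  rw [mul_comm]; field_simp
      _ = ∑ i ∈ s, P i * Real.logb 2 (1 / P i) := by
          apply Finset.sum_congr rfl; intro i hi
          have heq : ∑ j ∈ range (N+1), P i * Ptrans d i j * Real.logb 2 (1 / P i)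
              = (P i * Real.logb 2 (1 / P i)) * ∑ j ∈ range (N+1), Ptrans d i j := by
            rw [Finset.mul_sum]; apply Finset.sum_congr rfl; intro j _; ring
          rw [heq, ptrans_sum' (show i < N+1 by have := hN i hi; omega), mul_one]
      _ ≤ ∑ i ∈ s, (i:ℝ) * P i := entropy_le P s hs0 hppos hsums
  have hL : Lmean P = ∑ i ∈ s, (i:ℝ) * P i := Lmean_eq P s hsupp
  unfold hPen
  have : 0 ≤ Δ * ∑' i : ℕ, P i * d ^ i := mul_nonneg hΔ hpen
  rw [hL]; linarith

lemma exists_pmf_mean (ℓ : ℝ) (hℓ : 1 ≤ ℓ) : ∃ P : ℕ → ℝ, IsRunPMF P ∧ Lmean P = ℓ := by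
  classical
  set n : ℕ := ⌈ℓ⌉₊ + 1 with hn
  have hn2 : 2 ≤ n := by
    have : 1 ≤ ⌈ℓ⌉₊ := Nat.one_le_ceil_iff.mpr (by linarith)
    omega
  have hn1' : n ≠ 1 := by omega
  have hnℓ : ℓ ≤ (n:ℝ) := by
    have h1 := Nat.le_ceil ℓ
    have h2 : (⌈ℓ⌉₊:ℝ) ≤ (n:ℝ) := by exact_mod_cast Nat.le_succ ⌈ℓ⌉₊
    linarith
  have hn1 : (0:ℝ) < (n:ℝ) - 1 := by
    have : (2:ℝ) ≤ (n:ℝ) := by exact_mod_cast hn2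
    linarith
  set α : ℝ := (ℓ - 1) / ((n:ℝ) - 1) with hα
  have hα0 : 0 ≤ α := div_nonneg (by linarith) hn1.le
  have hα1 : α ≤ 1 := by
    rw [hα, div_le_one hn1]; linarith
  set P : ℕ → ℝ := fun i => if i = 1 then 1 - α else if i = n then α else 0 with hP
  have hP1 : P 1 = 1 - α := by simp [hP]
  have hPn : P n = α := by simp [hP, hn1']
  have hP0' : ∀ i, i ≠ 1 → i ≠ n → P i = 0 := by
    intro i h1 h2; simp [hP, h1, h2]
  have hmul : α * ((n:ℝ) - 1) = ℓ - 1 := by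
    rw [hα, div_mul_cancel₀]; exact hn1.ne'
  have hne : (1:ℕ) ≠ n := by omega
  have hout : ∀ i ∉ ({1, n} : Finset ℕ), P i = 0 := by
    intro i hi
    simp only [Finset.mem_insert, Finset.mem_singleton] at hi
    push_neg at hi
    exact hP0' i hi.1 hi.2
  refine ⟨P, ⟨?_, ?_, ?_, ?_⟩, ?_⟩
  · intro i
    by_cases h1 : i = 1
    · rw [h1, hP1]; linarith
    · by_cases h2 : i = n
      · rw [h2, hPn]; exact hα0
      · rw [hP0' i h1 h2]
  · exact hP0' 0 (by omega) (by omega)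
  · apply Set.Finite.subset (Set.finite_Icc 0 n)
    intro i hi
    simp only [Function.mem_support] at hi
    simp only [Set.mem_Icc]
    refine ⟨by omega, ?_⟩
    by_contra h
    push_neg at h
    exact hi (hP0' i (by omega) (by omega))
  · rw [tsum_eq_sum (s := {1, n}) hout, Finset.sum_pair hne, hP1, hPn]; ring
  · unfold Lmean
    rw [tsum_eq_sum (s := {1, n}) (fun i hi => by rw [hout i hi, mul_zero]),
      Finset.sum_pair hne, hP1, hPn]
    have hcast : (n:ℝ) = (⌈ℓ⌉₊:ℝ) + 1 := by rw [hn]; push_cast; ring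
    push_cast
    nlinarith [hmul, hcast]

set_option maxHeartbeats 2000000 in
lemma key_perturb {d Δ : ℝ} (hd0 : 0 < d) (hd1 : d < 1) (hΔ : 0 ≤ Δ)
    (P : ℕ → ℝ) (hP : IsRunPMF P) (ℓ₂ ε : ℝ) (hℓ₂ : Lmean P < ℓ₂) (hε : 0 < ε) :
    ∃ P' : ℕ → ℝ, IsRunPMF P' ∧ Lmean P' = ℓ₂ ∧ hPen d Δ P - ε ≤ hPen d Δ P' := by
  classical
  obtain ⟨hp0, hP0, hfin, hsum⟩ := hP
  set ℓ₁ := Lmean P with hℓ₁def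
  set s := hfin.toFinset with hs
  have hsupp : ∀ i ∉ s, P i = 0 := by
    intro i hi; simpa [hs, Set.Finite.mem_toFinset, Function.mem_support, not_not] using hi
  have hppos : ∀ i ∈ s, 0 < P i := by
    intro i hi
    have : P i ≠ 0 := by simpa [hs, Set.Finite.mem_toFinset, Function.mem_support] using hi
    exact lt_of_le_of_ne (hp0 i) (Ne.symm this)
  have hsums : ∑ i ∈ s, P i = 1 := by rw [← sum_pmf_eq P s hsupp]; exact hsum
  have hne : s.Nonempty := by
    rcases s.eq_empty_or_nonempty with h | h
    · rw [h] at hsums; simp at hsums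
    · exact h
  set N := s.max' hne with hNdef
  have hNs : N ∈ s := s.max'_mem hne
  have hN : ∀ i ∈ s, i ≤ N := fun i hi => Finset.le_max' s i hi
  set Q : ℕ → ℝ := fun j => ∑ i ∈ s, P i * Ptrans d i j with hQdef
  have hQ0 : ∀ j, 0 ≤ Q j := fun j =>
    Finset.sum_nonneg (fun i _ => mul_nonneg (hp0 i) (ptrans_nonneg hd0.le hd1.le i j))
  have hQpos : ∀ j, j ≤ N → 0 < Q j := by
    intro j hj
    have h1 : 0 < P N * Ptrans d N j := mul_pos (hppos N hNs) (ptrans_pos hd0 hd1 hj)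
    have h2 : P N * Ptrans d N j ≤ Q j :=
      Finset.single_le_sum (fun i _ => mul_nonneg (hp0 i) (ptrans_nonneg hd0.le hd1.le i j)) hNs
    linarith
  -- minimum of Q over range (N+1)
  obtain ⟨j₀, hj₀mem, hj₀min⟩ := Finset.exists_min_image (range (N+1)) Q ⟨0, by simp⟩
  set c := Q j₀ with hcdef
  have hcpos : 0 < c := hQpos j₀ (by simpa using Nat.lt_succ_iff.mp (Finset.mem_range.mp hj₀mem))
  have hc : ∀ j, j ≤ N → c ≤ Q j := fun j hj => hj₀min j (Finset.mem_range.mpr (by omega))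
  set R := Rmem d P with hRdef
  have hl2 : (0:ℝ) < Real.log 2 := Real.log_pos (by norm_num)
  -- the threshold t₀
  set t₀ : ℝ := min (min (ε/(3*(|R|+1))) (ε/(3*(Δ+1)))) (ε*c*Real.log 2/3) with ht₀def
  have ht₀pos : 0 < t₀ := by
    apply lt_min (lt_min _ _) _
    · positivity
    · positivity
    · positivity
  -- choose M
  obtain ⟨M, hM⟩ := exists_nat_ge (max ((N:ℝ)+1) (max (ℓ₂+1) (ℓ₁ + (ℓ₂-ℓ₁)/t₀)))
  have hMN : N < M := by
    have : (N:ℝ)+1 ≤ (M:ℝ) := le_trans (le_max_left _ _) hM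
    exact_mod_cast by exact_mod_cast Nat.lt_of_lt_of_le (Nat.lt_succ_self N) (by exact_mod_cast this)
  have hMℓ₂ : ℓ₂ + 1 ≤ (M:ℝ) := le_trans (le_trans (le_max_left _ _) (le_max_right _ _)) hM
  have hMt : ℓ₁ + (ℓ₂-ℓ₁)/t₀ ≤ (M:ℝ) := le_trans (le_trans (le_max_right _ _) (le_max_right _ _)) hM
  have hMℓ₁ : ℓ₁ < (M:ℝ) := by linarith
  set t : ℝ := (ℓ₂ - ℓ₁)/((M:ℝ) - ℓ₁) with htdef
  have ht0 : 0 < t := div_pos (by linarith) (by linarith)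
  have ht1 : t < 1 := by
    rw [htdef, div_lt_one (by linarith)]; linarith
  have htt₀ : t ≤ t₀ := by
    rw [htdef, div_le_iff₀ (by linarith)]
    have h1 : (ℓ₂-ℓ₁)/t₀ ≤ (M:ℝ) - ℓ₁ := by linarith
    calc ℓ₂ - ℓ₁ = t₀ * ((ℓ₂-ℓ₁)/t₀) := by rw [mul_div_cancel₀]; exact ht₀pos.ne'
      _ ≤ t₀ * ((M:ℝ) - ℓ₁) := by apply mul_le_mul_of_nonneg_left h1 ht₀pos.le
  have htM : t * ((M:ℝ) - ℓ₁) = ℓ₂ - ℓ₁ := div_mul_cancel₀ _ (by linarith)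
  -- the three bounds
  have hb1 : t * R ≤ ε/3 := by
    have h1 : t ≤ ε/(3*(|R|+1)) := le_trans htt₀ (le_trans (min_le_left _ _) (min_le_left _ _))
    have h2 : R ≤ |R| := le_abs_self R
    have h3 : 0 ≤ |R| := abs_nonneg R
    have h4 : t * R ≤ t * |R| := mul_le_mul_of_nonneg_left h2 ht0.le
    have h5 : t * |R| ≤ (ε/(3*(|R|+1))) * |R| := mul_le_mul_of_nonneg_right h1 h3
    have h6 : (ε/(3*(|R|+1))) * |R| ≤ ε/3 := by
      rw [div_mul_eq_mul_div, div_le_div_iff₀ (by positivity) (by norm_num)]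
      nlinarith
    linarith
  have hb2 : Δ * t ≤ ε/3 := by
    have h1 : t ≤ ε/(3*(Δ+1)) := le_trans htt₀ (le_trans (min_le_left _ _) (min_le_right _ _))
    have h4 : Δ * t ≤ Δ * (ε/(3*(Δ+1))) := mul_le_mul_of_nonneg_left h1 hΔ
    have h6 : Δ * (ε/(3*(Δ+1))) ≤ ε/3 := by
      rw [mul_div_assoc', div_le_div_iff₀ (by positivity) (by norm_num)]
      nlinarith
    linarith
  have hb3pre : 0 ≤ t/c := div_nonneg ht0.le hcpos.le
  have h1tc : (0:ℝ) < 1 + t/c := by linarith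
  have hCnn : 0 ≤ Real.logb 2 (1+t/c) := Real.logb_nonneg (by norm_num) (by linarith)
  have hb3 : Real.logb 2 (1+t/c) ≤ ε/3 := by
    have h1 : Real.log (1 + t/c) ≤ t/c := by
      have := Real.log_le_sub_one_of_pos h1tc
      linarith
    have h2 : t ≤ ε*c*Real.log 2/3 := le_trans htt₀ (min_le_right _ _)
    rw [Real.logb, div_le_iff₀ hl2]
    have h3 : t/c ≤ ε * Real.log 2/3 := by
      rw [div_le_iff₀ hcpos]; nlinarith
    calc Real.log (1+t/c) ≤ t/c := h1
      _ ≤ ε * Real.log 2 / 3 := h3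
      _ = ε/3 * Real.log 2 := by ring
  -- the perturbed pmf
  set P' : ℕ → ℝ := fun i => (1 - t) * P i + (if i = M then t else 0) with hP'def
  have hMs : M ∉ s := fun h => absurd (hN M h) (by omega)
  set s' : Finset ℕ := insert M s with hs'def
  have hsupp' : ∀ i ∉ s', P' i = 0 := by
    intro i hi
    simp only [hs'def, Finset.mem_insert, not_or] at hi
    simp [hP'def, hsupp i hi.2, hi.1]
  have hPM : P M = 0 := hsupp M hMs
  have hP'M : P' M = t := by simp [hP'def, hPM]
  have hP'i : ∀ i ∈ s, P' i = (1-t) * P i := by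
    intro i hi
    have : i ≠ M := fun h => hMs (h ▸ hi)
    simp [hP'def, this]
  have hP'nonneg : ∀ i, 0 ≤ P' i := by
    intro i
    rcases eq_or_ne i M with rfl | h
    · rw [hP'M]; exact ht0.le
    · have : P' i = (1-t) * P i := by simp [hP'def, h]
      rw [this]; exact mul_nonneg (by linarith) (hp0 i)
  have hsum' : ∑ i ∈ s', P' i = 1 := by
    rw [hs'def, Finset.sum_insert hMs, hP'M,
      Finset.sum_congr rfl hP'i, ← Finset.mul_sum, hsums]
    ring
  have hpmf' : IsRunPMF P' := by
    refine ⟨hP'nonneg, ?_, ?_, ?_⟩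
    · have h0M : (0:ℕ) ≠ M := by omega
      simp [hP'def, hP0, h0M]
    · apply Set.Finite.subset s'.finite_toSet
      intro i hi
      simp only [Function.mem_support] at hi
      by_contra h
      exact hi (hsupp' i (by simpa using h))
    · rw [sum_pmf_eq P' s' hsupp']; exact hsum'
  have hLmean' : Lmean P' = ℓ₂ := by
    rw [Lmean_eq P' s' hsupp', hs'def, Finset.sum_insert hMs, hP'M]
    have h1 : ∑ i ∈ s, (i:ℝ) * P' i = (1-t) * ∑ i ∈ s, (i:ℝ) * P i := by
      rw [Finset.mul_sum]; apply Finset.sum_congr rfl; intro i hi; rw [hP'i i hi]; ring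
    have h2 : ∑ i ∈ s, (i:ℝ) * P i = ℓ₁ := (Lmean_eq P s hsupp).symm
    rw [h1, h2]
    nlinarith [htM]
  -- the new output distribution
  set Q' : ℕ → ℝ := fun j => ∑ i ∈ s', P' i * Ptrans d i j with hQ'def
  have hQ'eq : ∀ j, Q' j = (1-t) * Q j + t * Ptrans d M j := by
    intro j
    simp only [hQ'def, hQdef]
    rw [hs'def, Finset.sum_insert hMs, hP'M]
    have h1 : ∑ i ∈ s, P' i * Ptrans d i j = (1-t) * ∑ i ∈ s, P i * Ptrans d i j := by
      rw [Finset.mul_sum]; apply Finset.sum_congr rfl; intro i hi; rw [hP'i i hi]; ring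
    rw [h1]; ring
  have hNM : ∀ i ∈ s', i ≤ M := by
    intro i hi
    rcases Finset.mem_insert.mp hi with rfl | h
    · exact le_refl i
    · exact le_trans (hN i h) hMN.le
  have hRmem' : Rmem d P' = ∑ i ∈ s', ∑ j ∈ range (M+1),
      P' i * Ptrans d i j * Real.logb 2 (Ptrans d i j / Q' j) := by
    rw [Rmem_eq d P' s' hsupp' M hNM]
  have hReq : R = ∑ i ∈ s, ∑ j ∈ range (M+1),
      P i * Ptrans d i j * Real.logb 2 (Ptrans d i j / Q j) := by
    rw [hRdef, Rmem_eq d P s hsupp M (fun i hi => le_trans (hN i hi) hMN.le)]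
  have hQ'0 : ∀ j, 0 ≤ Q' j := by
    intro j; rw [hQ'eq]
    have h1 := hQ0 j
    have h2 := ptrans_nonneg hd0.le hd1.le M j
    nlinarith
  have hQsum : ∑ j ∈ range (M+1), Q j = 1 := by
    simp only [hQdef]
    rw [Finset.sum_comm]
    calc ∑ i ∈ s, ∑ j ∈ range (M+1), P i * Ptrans d i j
        = ∑ i ∈ s, P i := by
          apply Finset.sum_congr rfl; intro i hi
          rw [← Finset.mul_sum, ptrans_sum' (show i < M+1 by have := hN i hi; omega), mul_one]
      _ = 1 := hsums
  have hQ'sum : ∑ j ∈ range (M+1), Q' j ≤ 1 := by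
    have h1 : ∑ j ∈ range (M+1), Q' j
        = (1-t) * (∑ j ∈ range (M+1), Q j) + t * ∑ j ∈ range (M+1), Ptrans d M j := by
      rw [Finset.mul_sum, Finset.mul_sum, ← Finset.sum_add_distrib]
      apply Finset.sum_congr rfl; intro j _; rw [hQ'eq]
    rw [h1, hQsum, ptrans_sum' (Nat.lt_succ_self M)]
    ring_nf
    exact le_refl 1
  have hblockM : 0 ≤ ∑ j ∈ range (M+1), P' M * Ptrans d M j * Real.logb 2 (Ptrans d M j / Q' j) := by
    have hg := gibbs (range (M+1)) (fun j => Ptrans d M j) Q'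
      (fun j _ => ptrans_nonneg hd0.le hd1.le M j) (fun j _ => hQ'0 j)
      (fun j _ hpj => by
        rw [hQ'eq]
        have h1 : 0 ≤ (1-t) * Q j := mul_nonneg (by linarith) (hQ0 j)
        nlinarith)
      (ptrans_sum' (Nat.lt_succ_self M)) hQ'sum
    have h2 : ∑ j ∈ range (M+1), P' M * Ptrans d M j * Real.logb 2 (Ptrans d M j / Q' j)
        = t * ∑ j ∈ range (M+1), Ptrans d M j * Real.logb 2 (Ptrans d M j / Q' j) := by
      rw [Finset.mul_sum]; apply Finset.sum_congr rfl; intro j _; rw [hP'M]; ring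
    rw [h2]
    apply mul_nonneg ht0.le
    simpa using hg
  have hmain : ∀ i ∈ s, ∀ j ∈ range (M+1),
      (1-t) * (P i * Ptrans d i j * Real.logb 2 (Ptrans d i j / Q j)
        - P i * Ptrans d i j * Real.logb 2 (1+t/c))
      ≤ P' i * Ptrans d i j * Real.logb 2 (Ptrans d i j / Q' j) := by
    intro i hi j _
    rw [hP'i i hi]
    rcases eq_or_lt_of_le (ptrans_nonneg hd0.le hd1.le i j) with h0 | h0
    · rw [← h0]; simp
    · have hji : j ≤ i := by
        by_contra h
        rw [ptrans_zero (by omega)] at h0; exact lt_irrefl _ h0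
      have hjN : j ≤ N := le_trans hji (hN i hi)
      have hQj : 0 < Q j := hQpos j hjN
      have hcj : c ≤ Q j := hc j hjN
      have hQ'j : 0 < Q' j := by
        rw [hQ'eq]
        have h2 : 0 ≤ t * Ptrans d M j := mul_nonneg ht0.le (ptrans_nonneg hd0.le hd1.le M j)
        nlinarith
      have hkey : Real.logb 2 (Ptrans d i j / Q j) - Real.logb 2 (1+t/c)
          ≤ Real.logb 2 (Ptrans d i j / Q' j) := by
        have hQle : Q' j ≤ Q j * (1 + t/c) := by
          rw [hQ'eq]
          have ha : Ptrans d M j ≤ 1 := ptrans_le_one hd0.le hd1.le M j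
          have hb : t * Ptrans d M j ≤ t := by nlinarith
          have hc' : t ≤ t * (Q j / c) := by
            have : 1 ≤ Q j / c := (one_le_div hcpos).mpr hcj
            nlinarith
          have hd' : Q j * (1 + t/c) = Q j + t * (Q j / c) := by ring
          nlinarith [mul_nonneg ht0.le (hQ0 j)]
        have hlogle : Real.logb 2 (Q' j) ≤ Real.logb 2 (Q j) + Real.logb 2 (1+t/c) := by
          have hmono := Real.logb_le_logb_of_le (show (1:ℝ) < 2 by norm_num) hQ'j hQle
          rwa [Real.logb_mul hQj.ne' h1tc.ne'] at hmono
        rw [Real.logb_div h0.ne' hQj.ne', Real.logb_div h0.ne' hQ'j.ne']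
        linarith
      have hfac : 0 ≤ P i * Ptrans d i j := mul_nonneg (hp0 i) h0.le
      have h5 := mul_le_mul_of_nonneg_left hkey hfac
      have h6 := mul_le_mul_of_nonneg_left h5 (show (0:ℝ) ≤ 1 - t by linarith)
      calc (1-t) * (P i * Ptrans d i j * Real.logb 2 (Ptrans d i j / Q j)
            - P i * Ptrans d i j * Real.logb 2 (1+t/c))
          = (1-t) * (P i * Ptrans d i j * (Real.logb 2 (Ptrans d i j / Q j)
            - Real.logb 2 (1+t/c))) := by ring
        _ ≤ (1-t) * (P i * Ptrans d i j * Real.logb 2 (Ptrans d i j / Q' j)) := h6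
        _ = (1-t) * P i * Ptrans d i j * Real.logb 2 (Ptrans d i j / Q' j) := by ring
  have hB : ∑ i ∈ s, ∑ j ∈ range (M+1), P i * Ptrans d i j * Real.logb 2 (1+t/c)
      = Real.logb 2 (1+t/c) := by
    have h1 : ∀ i ∈ s, ∑ j ∈ range (M+1), P i * Ptrans d i j * Real.logb 2 (1+t/c)
        = P i * Real.logb 2 (1+t/c) := by
      intro i hi
      have hlt : i < M+1 := by have := hN i hi; omega
      calc ∑ j ∈ range (M+1), P i * Ptrans d i j * Real.logb 2 (1+t/c)
          = (P i * Real.logb 2 (1+t/c)) * ∑ j ∈ range (M+1), Ptrans d i j := by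
            rw [Finset.mul_sum]; apply Finset.sum_congr rfl; intro j _; ring
        _ = P i * Real.logb 2 (1+t/c) := by rw [ptrans_sum' hlt, mul_one]
    rw [Finset.sum_congr rfl h1, ← Finset.sum_mul, hsums, one_mul]
  have hsum_main : (1-t) * (R - Real.logb 2 (1+t/c))
      ≤ ∑ i ∈ s, ∑ j ∈ range (M+1), P' i * Ptrans d i j * Real.logb 2 (Ptrans d i j / Q' j) := by
    calc (1-t) * (R - Real.logb 2 (1+t/c))
        = ∑ i ∈ s, ∑ j ∈ range (M+1),
            (1-t) * (P i * Ptrans d i j * Real.logb 2 (Ptrans d i j / Q j)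
              - P i * Ptrans d i j * Real.logb 2 (1+t/c)) := by
          have hE : ∑ i ∈ s, ∑ j ∈ range (M+1),
              (1-t) * (P i * Ptrans d i j * Real.logb 2 (Ptrans d i j / Q j)
                - P i * Ptrans d i j * Real.logb 2 (1+t/c))
              = (1-t) * ((∑ i ∈ s, ∑ j ∈ range (M+1),
                  P i * Ptrans d i j * Real.logb 2 (Ptrans d i j / Q j))
                - ∑ i ∈ s, ∑ j ∈ range (M+1),
                  P i * Ptrans d i j * Real.logb 2 (1+t/c)) := by
            rw [← Finset.sum_sub_distrib, Finset.mul_sum]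
            apply Finset.sum_congr rfl; intro i _
            rw [← Finset.sum_sub_distrib, Finset.mul_sum]
          rw [hE, hB, ← hReq]
      _ ≤ _ := Finset.sum_le_sum (fun i hi => Finset.sum_le_sum (fun j hj => hmain i hi j hj))
  have hR' : (1-t) * (R - Real.logb 2 (1+t/c)) ≤ Rmem d P' := by
    rw [hRmem', hs'def, Finset.sum_insert hMs]
    have h1 := hblockM
    have h2 := hsum_main
    linarith
  have hpen' : ∑' i : ℕ, P' i * d ^ i ≤ (∑' i : ℕ, P i * d ^ i) + t := by
    rw [pen_eq d P' s' hsupp', pen_eq d P s hsupp, hs'def, Finset.sum_insert hMs, hP'M]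
    have h1 : ∑ i ∈ s, P' i * d ^ i = (1-t) * ∑ i ∈ s, P i * d ^ i := by
      rw [Finset.mul_sum]; apply Finset.sum_congr rfl; intro i hi; rw [hP'i i hi]; ring
    rw [h1]
    have h2 : 0 ≤ ∑ i ∈ s, P i * d ^ i :=
      Finset.sum_nonneg (fun i _ => mul_nonneg (hp0 i) (pow_nonneg hd0.le i))
    have h3 : d ^ M ≤ 1 := pow_le_one₀ hd0.le hd1.le
    nlinarith
  refine ⟨P', hpmf', hLmean', ?_⟩
  unfold hPen
  rw [← hRdef]
  have hΔpen : Δ * (∑' i : ℕ, P' i * d ^ i) ≤ Δ * (∑' i : ℕ, P i * d ^ i) + Δ * t := by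
    nlinarith [mul_le_mul_of_nonneg_left hpen' hΔ]
  have htC : 0 ≤ t * Real.logb 2 (1+t/c) := mul_nonneg ht0.le hCnn
  have hexp : (1-t) * (R - Real.logb 2 (1+t/c))
      = R - Real.logb 2 (1+t/c) - t*R + t*Real.logb 2 (1+t/c) := by ring
  rw [hexp] at hR'
  linarith

/-- For `d ∈ (0,1)`, `Δ ≥ 0` and `1 ≤ ℓ₁ < ℓ₂`, the constrained
supremum `I(ℓ)` of the penalized rate is non-decreasing: `I(ℓ₁) ≤ I(ℓ₂)`. -/
theorem Isup_mono (d Δ : ℝ) (hd₀ : 0 < d) (hd₁ : d < 1) (hΔ : 0 ≤ Δ)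
    (ℓ₁ ℓ₂ : ℝ) (hℓ₁ : 1 ≤ ℓ₁) (hℓ₁₂ : ℓ₁ < ℓ₂) :
    Isup d Δ ℓ₁ ≤ Isup d Δ ℓ₂ := by
  obtain ⟨P₀, hP₀, hL₀⟩ := exists_pmf_mean ℓ₁ hℓ₁
  have hne : {r | ∃ P : ℕ → ℝ, IsRunPMF P ∧ Lmean P = ℓ₁ ∧ r = hPen d Δ P}.Nonempty :=
    ⟨hPen d Δ P₀, P₀, hP₀, hL₀, rfl⟩
  have hbdd₂ : BddAbove {r | ∃ P : ℕ → ℝ, IsRunPMF P ∧ Lmean P = ℓ₂ ∧ r = hPen d Δ P} := by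
    refine ⟨ℓ₂, ?_⟩
    rintro r ⟨P, hP, hL, rfl⟩
    rw [← hL]
    exact hPen_le_Lmean hd₀ hd₁ hΔ P hP
  unfold Isup
  apply csSup_le hne
  rintro r ⟨P, hP, hL, rfl⟩
  apply le_of_forall_pos_le_add
  intro ε hε
  obtain ⟨P', hP', hL', hh⟩ :=
    key_perturb hd₀ hd₁ hΔ P hP ℓ₂ ε (by rw [hL]; exact hℓ₁₂) hε
  have hmem : hPen d Δ P' ∈ {r | ∃ P : ℕ → ℝ, IsRunPMF P ∧ Lmean P = ℓ₂ ∧ r = hPen d Δ P} :=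
    ⟨P', hP', hL', rfl⟩
  have hle := le_csSup hbdd₂ hmem
  linarith
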